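/- Let O be a finite set and u an ultra-metric on O. Then the total weight ∑_{e∈T} w(e) of a minimum spanning tree T of w is the same for all weights w in the single-linkage fiber SL⁻¹(u) and all choices of minimum spanning tree T of w; in fact it equals the total weight of any minimum spanning tree of u. -/

import Mathlib

open SimpleGraph Finset

variable {V : Type*} [Fintype V] [DecidableEq V]

/-- Total weight of (the edge set of) a simple graph `T` under edge weights `w`. -/
noncomputable def totalWeight (w : Sym2 V → ℝ) (T : SimpleGraph V) : ℝ :=
  ∑ e ∈ (Set.toFinite T.edgeSet).toFinset, w e

/-- `T` is a minimum spanning tree of the complete graph on `V` with weights `w`. -/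
def IsMST (w : Sym2 V → ℝ) (T : SimpleGraph V) : Prop :=
  T.IsTree ∧ ∀ T' : SimpleGraph V, T'.IsTree → totalWeight w T ≤ totalWeight w T'

/-- A weight on the complete graph: nonnegative, vanishing on the diagonal. -/
def IsWeight (d : Sym2 V → ℝ) : Prop :=
  (∀ e, 0 ≤ d e) ∧ ∀ x : V, d s(x, x) = 0

/-- An ultra-metric, encoded as a function on unordered pairs. -/
def IsUltrametric (u : Sym2 V → ℝ) : Prop :=
  IsWeight u ∧ ∀ x y z : V, u s(x, z) ≤ max (u s(x, y)) (u s(y, z))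

/-- A (pseudo-)metric, encoded as a function on unordered pairs. -/
def IsMetric (d : Sym2 V → ℝ) : Prop :=
  IsWeight d ∧ ∀ x y z : V, d s(x, z) ≤ d s(x, y) + d s(y, z)

/-- The single linkage ultra-metric of a weight `d`. -/
noncomputable def SL (d : Sym2 V → ℝ) (e : Sym2 V) : ℝ :=
  sSup {r | ∃ u : Sym2 V → ℝ, IsUltrametric u ∧ u ≤ d ∧ u e = r}

/-- Maximum weight of an edge along a walk (0 for the empty walk). -/
noncomputable def pathMax (w : Sym2 V → ℝ) {T : SimpleGraph V} {x y : V}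
    (p : T.Walk x y) : ℝ :=
  (p.edges.map w).foldr max 0

/-- Sum of weights of the edges along a walk. -/
noncomputable def pathSum (w : Sym2 V → ℝ) {T : SimpleGraph V} {x y : V}
    (p : T.Walk x y) : ℝ :=
  (p.edges.map w).sum

/-- `alpha T hT w x y`: max weight of an edge on the unique path in the tree `T` from `x` to `y`. -/
noncomputable def alpha (T : SimpleGraph V) (hT : T.IsTree) (w : Sym2 V → ℝ)
    (x y : V) : ℝ :=
  pathMax w (hT.existsUnique_path x y).exists.choose

/-- `omega T hT w x y`: the tree metric, the sum of weights along the unique path in `T`. -/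
noncomputable def treeOmega (T : SimpleGraph V) (hT : T.IsTree) (w : Sym2 V → ℝ)
    (x y : V) : ℝ :=
  pathSum w (hT.existsUnique_path x y).exists.choose

/-- Ultra-metric as a two-variable function. -/
def IsUltrametricFn (u : V → V → ℝ) : Prop :=
  (∀ x y, 0 ≤ u x y) ∧ (∀ x, u x x = 0) ∧ (∀ x y, u x y = u y x) ∧
    ∀ x y z, u x z ≤ max (u x y) (u y z)

/-! ### Auxiliary lemmas -/

namespace MSTAux

/-! #### List max lemmas -/

lemma foldr_max_nonneg (l : List ℝ) : 0 ≤ l.foldr max 0 := by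
  induction l with
  | nil => simp
  | cons a l ih => exact ih.trans (le_max_right _ _)

lemma le_foldr_max {a : ℝ} {l : List ℝ} (h : a ∈ l) : a ≤ l.foldr max 0 := by
  induction l with
  | nil => simp at h
  | cons b l ih =>
    rcases List.mem_cons.1 h with rfl | h
    · exact le_max_left _ _
    · exact (ih h).trans (le_max_right _ _)

lemma foldr_max_le {c : ℝ} (hc : 0 ≤ c) {l : List ℝ} (h : ∀ a ∈ l, a ≤ c) :
    l.foldr max 0 ≤ c := by
  induction l with
  | nil => simpa
  | cons b l ih =>
    simp only [List.foldr_cons, max_le_iff]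
    exact ⟨h b (by simp), ih fun a ha => h a (by simp [ha])⟩

lemma foldr_max_append (l₁ l₂ : List ℝ) :
    (l₁ ++ l₂).foldr max 0 = max (l₁.foldr max 0) (l₂.foldr max 0) := by
  induction l₁ with
  | nil => simp [max_eq_right (foldr_max_nonneg l₂)]
  | cons a l ih => simp [ih, max_assoc]

lemma foldr_max_reverse (l : List ℝ) : l.reverse.foldr max 0 = l.foldr max 0 := by
  induction l with
  | nil => rfl
  | cons a l ih =>
    rw [List.reverse_cons, foldr_max_append, ih]
    simp only [List.foldr_cons, List.foldr_nil]
    rcases le_total a 0 with h | h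
    · rw [max_eq_right h, max_eq_left (foldr_max_nonneg l),
        max_eq_right (h.trans (foldr_max_nonneg l))]
    · rw [max_eq_left h, max_comm]

/-! #### Graph lemmas -/

variable {G H : SimpleGraph V}

lemma connected_of_adj_reachable (hG : G.Connected)
    (h : ∀ a b : V, G.Adj a b → H.Reachable a b) : H.Connected := by
  rw [connected_iff]
  refine ⟨fun a b => ?_, hG.nonempty⟩
  obtain ⟨p⟩ := hG.preconnected a b
  induction p with
  | nil => exact Reachable.refl _
  | cons h' q ih => exact (h _ _ h').trans ih

lemma exists_split_of_mem_edges {f : Sym2 V} :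
    ∀ {x y : V} (p : G.Walk x y), p.IsTrail → f ∈ p.edges →
      ∃ a b : V, f = s(a, b) ∧ ∃ (q : G.Walk x a) (r : G.Walk b y),
        f ∉ q.edges ∧ f ∉ r.edges := by
  intro x y p
  induction p with
  | nil => intro _ hf; simp at hf
  | @cons x c y h q ih =>
    intro ht hf
    rw [SimpleGraph.Walk.isTrail_cons] at ht
    by_cases hfe : f = s(x, c)
    · subst hfe
      exact ⟨x, c, rfl, SimpleGraph.Walk.nil, q, by simp, ht.2⟩
    · have hf' : f ∈ q.edges := by
        rcases List.mem_cons.1 (by simpa using hf) with h1 | h1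
        · exact absurd h1 hfe
        · exact h1
      obtain ⟨a, b, rfl, q', r', hq', hr'⟩ := ih ht.1 hf'
      refine ⟨a, b, rfl, SimpleGraph.Walk.cons h q', r', ?_, hr'⟩
      simp only [SimpleGraph.Walk.edges_cons, List.mem_cons]
      rintro (h1 | h1)
      · exact hfe h1
      · exact hq' h1

lemma exists_crossing_edge {A : Set V} :
    ∀ {a b : V} (p : G.Walk a b), a ∈ A → b ∉ A →
      ∃ c d : V, G.Adj c d ∧ s(c, d) ∈ p.edges ∧ c ∈ A ∧ d ∉ A := by
  intro a b p
  induction p with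
  | nil => intro ha hb; exact absurd ha hb
  | @cons a c b h q ih =>
    intro ha hb
    by_cases hc : c ∈ A
    · obtain ⟨c', d', h', hm, hc', hd'⟩ := ih hc hb
      exact ⟨c', d', h', by simp [hm], hc', hd'⟩
    · exact ⟨a, c, h, by simp, ha, hc⟩

lemma path_unique {T : SimpleGraph V} (hT : T.IsTree) {x y : V}
    {p q : T.Walk x y} (hp : p.IsPath) (hq : q.IsPath) : p = q :=
  (hT.existsUnique_path x y).unique hp hq

lemma tree_eq_of_le {T T' : SimpleGraph V} (hT : T.IsTree) (hT' : T'.IsTree)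
    (h : T ≤ T') : T = T' := by
  by_contra hne
  have hsub : T.edgeSet ⊆ T'.edgeSet := edgeSet_subset_edgeSet.2 h
  have hnsub : ¬ T'.edgeSet ⊆ T.edgeSet := by
    intro hh
    exact hne (le_antisymm h (edgeSet_subset_edgeSet.1 hh))
  obtain ⟨e, heT', heT⟩ := Set.not_subset.1 hnsub
  induction e using Sym2.ind with
  | _ a b =>
    have hadj : T'.Adj a b := (SimpleGraph.mem_edgeSet _).1 heT'
    obtain ⟨p, hp⟩ := (hT.existsUnique_path a b).exists
    have hedges : ∀ g ∈ p.edges, g ∈ T'.edgeSet :=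
      fun g hg => hsub (p.edges_subset_edgeSet hg)
    have hq : (p.transfer T' hedges).IsPath := hp.transfer hedges
    have hne' : s(b, a) ∉ (p.transfer T' hedges).edges := by
      rw [SimpleGraph.Walk.edges_transfer, Sym2.eq_swap]
      intro hmem
      exact heT (p.edges_subset_edgeSet hmem)
    have hcyc := SimpleGraph.Path.cons_isCycle ⟨p.transfer T' hedges, hq⟩ hadj.symm hne'
    exact hT'.IsAcyclic _ hcyc

lemma totalWeight_exchange (w : Sym2 V → ℝ) {T T'' : SimpleGraph V} {e f : Sym2 V}
    (hf : f ∈ T.edgeSet) (he : e ∉ T.edgeSet)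
    (hE : T''.edgeSet = (T.edgeSet \ {f}) ∪ {e}) :
    totalWeight w T'' = totalWeight w T - w f + w e := by
  classical
  have hfin : (Set.toFinite T''.edgeSet).toFinset
      = insert e ((Set.toFinite T.edgeSet).toFinset.erase f) := by
    ext g
    simp only [Set.Finite.mem_toFinset, hE, Set.mem_union, Set.mem_diff,
      Set.mem_singleton_iff, Finset.mem_insert, Finset.mem_erase]
    tauto
  rw [totalWeight, hfin, Finset.sum_insert (by
    simp only [Finset.mem_erase, Set.Finite.mem_toFinset]
    intro hcon
    exact he hcon.2)]
  have hsum : ∑ g ∈ (Set.toFinite T.edgeSet).toFinset.erase f, w g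
      = (∑ g ∈ (Set.toFinite T.edgeSet).toFinset, w g) - w f := by
    rw [eq_sub_iff_add_eq, Finset.sum_erase_add]
    simpa [Set.Finite.mem_toFinset] using hf
  rw [hsum, totalWeight]
  ring

/-- The key exchange lemma: in a tree `T`, if `f` lies on a path from `x` to `y` and
`s(x,y)` is not an edge of `T`, then swapping `f` for `s(x,y)` yields a tree. -/
lemma tree_exchange {T : SimpleGraph V} (hT : T.IsTree) {x y : V} (hxy : x ≠ y)
    (he : s(x, y) ∉ T.edgeSet) {p : T.Walk x y} (hp : p.IsPath) {f : Sym2 V}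
    (hf : f ∈ p.edges) :
    ∃ T'' : SimpleGraph V, T''.IsTree ∧
      T''.edgeSet = (T.edgeSet \ {f}) ∪ {s(x, y)} := by
  classical
  set e : Sym2 V := s(x, y) with hedef
  have hfT : f ∈ T.edgeSet := p.edges_subset_edgeSet hf
  have hfe : f ≠ e := fun h => he (h ▸ hfT)
  set T'' : SimpleGraph V := T.deleteEdges {f} ⊔ fromEdgeSet {e} with hT''def
  have hES : T''.edgeSet = (T.edgeSet \ {f}) ∪ {e} := by
    rw [hT''def, edgeSet_sup, edgeSet_deleteEdges, edgeSet_fromEdgeSet]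
    have : ({e} : Set (Sym2 V)) \ {e' : Sym2 V | e'.IsDiag} = {e} := by
      ext g
      simp only [Set.mem_diff, Set.mem_singleton_iff, Set.mem_setOf_eq,
        and_iff_left_iff_imp]
      rintro rfl
      simp [hedef, Sym2.isDiag_iff_proj_eq, hxy]
    rw [show ({e} : Set (Sym2 V)) \ Sym2.diagSet = {e} from this]
  have hadjxy : T''.Adj x y := by
    rw [hT''def, sup_adj, fromEdgeSet_adj]
    exact Or.inr ⟨rfl, hxy⟩
  -- connectivity
  have hconn : T''.Connected := by
    refine connected_of_adj_reachable hT.isConnected fun a b hab => ?_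
    by_cases hab' : s(a, b) = f
    · obtain ⟨a', b', hab'', q, r, hq, hr⟩ :=
        exists_split_of_mem_edges (f := f) p hp.isTrail hf
      have htrq : ∀ g ∈ q.edges, g ∈ T''.edgeSet := by
        intro g hg
        rw [hES]
        exact Or.inl ⟨q.edges_subset_edgeSet hg, fun hgf => hq (hgf ▸ hg)⟩
      have htrr : ∀ g ∈ r.edges, g ∈ T''.edgeSet := by
        intro g hg
        rw [hES]
        exact Or.inl ⟨r.edges_subset_edgeSet hg, fun hgf => hr (hgf ▸ hg)⟩
      have hr1 : T''.Reachable x a' := ⟨q.transfer T'' htrq⟩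
      have hr2 : T''.Reachable b' y := ⟨r.transfer T'' htrr⟩
      have hr3 : T''.Reachable a' b' :=
        (hr1.symm.trans hadjxy.reachable).trans hr2.symm
      have : s(a, b) = s(a', b') := hab'.trans hab''
      rcases Sym2.eq_iff.1 this with ⟨rfl, rfl⟩ | ⟨rfl, rfl⟩
      · exact hr3
      · exact hr3.symm
    · refine SimpleGraph.Adj.reachable ?_
      rw [hT''def, sup_adj, deleteEdges_adj]
      exact Or.inl ⟨hab, by simpa using hab'⟩
  -- acyclicity
  have hacyc : T''.IsAcyclic := by
    intro v c hc
    by_cases hec : e ∈ c.edges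
    · have hreach : (T'' \ fromEdgeSet {e}).Reachable x y :=
        ((adj_and_reachable_delete_edges_iff_exists_cycle (G := T'')).2
          ⟨v, c, hc, by rwa [← hedef]⟩).2
      have hle : T'' \ fromEdgeSet {e} ≤ T.deleteEdges {f} := by
        intro a b hab
        rw [sdiff_adj] at hab
        rcases (sup_adj _ _ _ _).1 hab.1 with h1 | h1
        · exact h1
        · exact absurd h1 hab.2
      obtain ⟨p₂⟩ := hreach.mono hle
      have hp₂e : ∀ g ∈ p₂.edges, g ∈ T.edgeSet := by
        intro g hg
        have := p₂.edges_subset_edgeSet hg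
        rw [edgeSet_deleteEdges] at this
        exact this.1
      have hfnot : f ∉ p₂.edges := by
        intro hcon
        have := p₂.edges_subset_edgeSet hcon
        rw [edgeSet_deleteEdges] at this
        exact this.2 rfl
      set p₃ : T.Walk x y := p₂.transfer T hp₂e with hp₃def
      have hpp : p = (p₃.toPath : T.Walk x y) := path_unique hT hp p₃.toPath.2
      have hfin : f ∈ (p₃.toPath : T.Walk x y).edges := by rw [← hpp]; exact hf
      have hfin2 : f ∈ p₃.edges := SimpleGraph.Walk.edges_toPath_subset p₃ hfin
      rw [hp₃def, SimpleGraph.Walk.edges_transfer] at hfin2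
      exact hfnot hfin2
    · have hce : ∀ g ∈ c.edges, g ∈ T.edgeSet := by
        intro g hg
        have := c.edges_subset_edgeSet hg
        rw [hES] at this
        rcases this with h1 | h1
        · exact h1.1
        · exact absurd (Set.mem_singleton_iff.1 h1) (fun hh => hec (hh ▸ hg))
      exact hT.IsAcyclic _ (hc.transfer hce)
  exact ⟨T'', ⟨hconn, hacyc⟩, hES⟩

/-- Cycle property: in an MST every edge on a tree path is no heavier than
the direct edge between the endpoints. -/
lemma cycle_property {w : Sym2 V → ℝ} {T : SimpleGraph V} (hT : T.IsTree)
    (hmin : ∀ T' : SimpleGraph V, T'.IsTree → totalWeight w T ≤ totalWeight w T')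
    {x y : V} {p : T.Walk x y} (hp : p.IsPath) {f : Sym2 V} (hf : f ∈ p.edges) :
    w f ≤ w s(x, y) := by
  have hxy : x ≠ y := by
    rintro rfl
    rw [(SimpleGraph.Walk.isPath_iff_eq_nil (p := p)).1 hp] at hf
    simp at hf
  by_cases he : s(x, y) ∈ T.edgeSet
  · have hadj : T.Adj x y := (SimpleGraph.mem_edgeSet _).1 he
    have : p = (SimpleGraph.Path.singleton hadj : T.Walk x y) :=
      path_unique hT hp (SimpleGraph.Path.singleton hadj).2
    rw [this] at hf
    simp only [SimpleGraph.Path.singleton, SimpleGraph.Walk.edges_cons,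
      SimpleGraph.Walk.edges_nil, List.mem_singleton] at hf
    rw [hf]
  · obtain ⟨T'', hT'', hE⟩ := tree_exchange hT hxy he hp hf
    have hfT : f ∈ T.edgeSet := p.edges_subset_edgeSet hf
    have hle := hmin T'' hT''
    rw [totalWeight_exchange w hfT he hE] at hle
    linarith

/-- Sufficiency of the cycle condition: a tree all of whose path edges are no heavier
than the corresponding direct edges is a minimum spanning tree. -/
lemma isMST_of_cycle_cond {w : Sym2 V → ℝ} {T : SimpleGraph V} (hT : T.IsTree)
    (hcond : ∀ (x y : V) (p : T.Walk x y), p.IsPath → ∀ f ∈ p.edges, w f ≤ w s(x, y)) :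
    ∀ T' : SimpleGraph V, T'.IsTree → totalWeight w T ≤ totalWeight w T' := by
  classical
  suffices H : ∀ (n : ℕ) (T' : SimpleGraph V), T'.IsTree →
      ((Set.toFinite T.edgeSet).toFinset \ (Set.toFinite T'.edgeSet).toFinset).card ≤ n →
      totalWeight w T ≤ totalWeight w T' by
    intro T' hT'
    exact H _ T' hT' le_rfl
  have hempty : ∀ T' : SimpleGraph V, T'.IsTree →
      ((Set.toFinite T.edgeSet).toFinset \ (Set.toFinite T'.edgeSet).toFinset) = ∅ →
      totalWeight w T ≤ totalWeight w T' := by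
    intro T' hT' hD
    have hsub : T.edgeSet ⊆ T'.edgeSet := by
      intro g hg
      have : g ∈ (Set.toFinite T.edgeSet).toFinset := (Set.Finite.mem_toFinset _).2 hg
      by_contra hcon
      have : g ∈ (Set.toFinite T.edgeSet).toFinset \ (Set.toFinite T'.edgeSet).toFinset :=
        Finset.mem_sdiff.2 ⟨this, fun hh => hcon ((Set.Finite.mem_toFinset _).1 hh)⟩
      rw [hD] at this
      simp at this
    have : T = T' := tree_eq_of_le hT hT' (edgeSet_subset_edgeSet.1 hsub)
    rw [this]
  intro n
  induction n with
  | zero =>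
    intro T' hT' hcard
    exact hempty T' hT' (Finset.card_eq_zero.1 (Nat.le_zero.1 hcard))
  | succ n ih =>
    intro T' hT' hcard
    by_cases hD : ((Set.toFinite T.edgeSet).toFinset \ (Set.toFinite T'.edgeSet).toFinset) = ∅
    · exact hempty T' hT' hD
    · obtain ⟨e, heD⟩ := Finset.nonempty_iff_ne_empty.2 hD
      rw [Finset.mem_sdiff, Set.Finite.mem_toFinset, Set.Finite.mem_toFinset] at heD
      obtain ⟨heT, heT'⟩ := heD
      induction e using Sym2.ind with
      | _ x y =>
      have hadj : T.Adj x y := (SimpleGraph.mem_edgeSet _).1 heT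
      have hxy : x ≠ y := hadj.ne
      -- the component of x after deleting e from T
      set A : Set V := {v | (T.deleteEdges {s(x, y)}).Reachable x v} with hAdef
      have hxA : x ∈ A := Reachable.refl x
      have hyA : y ∉ A := by
        intro hy
        rw [hAdef, Set.mem_setOf_eq, deleteEdges] at hy
        obtain ⟨p', hp'⟩ := (reachable_delete_edges_iff_exists_walk).1 hy
        have hup : (p'.toPath : T.Walk x y) = (SimpleGraph.Path.singleton hadj : T.Walk x y) :=
          path_unique hT p'.toPath.2 (SimpleGraph.Path.singleton hadj).2
        have : s(x, y) ∈ (p'.toPath : T.Walk x y).edges := by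
          rw [hup]
          simp [SimpleGraph.Path.singleton]
        exact hp' (SimpleGraph.Walk.edges_toPath_subset p' this)
      have hcut : ∀ c d : V, T.Adj c d → c ∈ A → d ∉ A → s(c, d) = s(x, y) := by
        intro c d hcd hcA hdA
        by_contra hne
        have : (T.deleteEdges {s(x, y)}).Adj c d := by
          rw [deleteEdges_adj]
          exact ⟨hcd, by simpa using hne⟩
        exact hdA ((show (T.deleteEdges {s(x, y)}).Reachable x c from hcA).trans this.reachable)
      -- the unique path in T' from x to y crosses the cut
      obtain ⟨p', hp'⟩ := (hT'.existsUnique_path x y).exists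
      obtain ⟨a, b, hab, hfmem, haA, hbA⟩ := exists_crossing_edge p' hxA hyA
      set f : Sym2 V := s(a, b) with hfdef
      have hfT' : f ∈ T'.edgeSet := (SimpleGraph.mem_edgeSet _).2 hab
      have hfne : f ≠ s(x, y) := by
        intro hfeq
        rcases Sym2.eq_iff.1 hfeq with ⟨rfl, rfl⟩ | ⟨rfl, rfl⟩
        · exact heT' ((SimpleGraph.mem_edgeSet _).2 hab)
        · first
          | exact hbA hxA
          | exact hyA haA
          | exact absurd hxA hbA
          | exact absurd haA hyA
      have hfT : f ∉ T.edgeSet := by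
        intro hcon
        exact hfne (hcut a b ((SimpleGraph.mem_edgeSet _).1 hcon) haA hbA)
      -- e lies on the T-path from a to b
      obtain ⟨q, hq⟩ := (hT.existsUnique_path a b).exists
      have hemem : s(x, y) ∈ q.edges := by
        obtain ⟨c, d, hcd, hm, hcA, hdA⟩ := exists_crossing_edge q haA hbA
        have := hcut c d hcd hcA hdA
        rwa [this] at hm
      have hwe : w s(x, y) ≤ w f := hcond a b q hq _ hemem
      -- exchange in T'
      have hab' : a ≠ b := hab.ne
      obtain ⟨T'', hT'', hE⟩ := tree_exchange hT' hxy heT' hp' hfmem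
      have hwT'' : totalWeight w T'' = totalWeight w T' - w f + w s(x, y) :=
        totalWeight_exchange w hfT' heT' hE
      have hcard'' :
          ((Set.toFinite T.edgeSet).toFinset \ (Set.toFinite T''.edgeSet).toFinset).card ≤ n := by
        have hss : ((Set.toFinite T.edgeSet).toFinset \ (Set.toFinite T''.edgeSet).toFinset)
            ⊂ ((Set.toFinite T.edgeSet).toFinset \ (Set.toFinite T'.edgeSet).toFinset) := by
          constructor
          · intro g hg
            rw [Finset.mem_sdiff, Set.Finite.mem_toFinset, Set.Finite.mem_toFinset] at hg ⊢
            refine ⟨hg.1, fun hgT' => ?_⟩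
            apply hg.2
            rw [hE]
            exact Or.inl ⟨hgT', fun hgf => hfT (Set.mem_singleton_iff.1 hgf ▸ hg.1)⟩
          · intro hsub
            have : s(x, y) ∈ (Set.toFinite T.edgeSet).toFinset \
                (Set.toFinite T'.edgeSet).toFinset := by
              rw [Finset.mem_sdiff, Set.Finite.mem_toFinset, Set.Finite.mem_toFinset]
              exact ⟨heT, heT'⟩
            have := hsub this
            rw [Finset.mem_sdiff, Set.Finite.mem_toFinset, Set.Finite.mem_toFinset] at this
            apply this.2
            rw [hE]
            exact Or.inr rfl
        have := Finset.card_lt_card hss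
        omega
      have hIH := ih T'' hT'' hcard''
      calc totalWeight w T ≤ totalWeight w T'' := hIH
        _ = totalWeight w T' - w f + w s(x, y) := hwT''
        _ ≤ totalWeight w T' := by linarith

end MSTAux

open MSTAux in
/-- the total MST weight is constant on the single-linkage fiber of `u`,
and equals the total weight of any MST of `u`. -/
theorem mst_weight_constant_on_fiber (u : Sym2 V → ℝ) (hu : IsUltrametric u)
    (T₀ : SimpleGraph V) (hT₀ : IsMST u T₀) :
    ∀ w : Sym2 V → ℝ, IsWeight w → SL w = u →
      ∀ T : SimpleGraph V, IsMST w T → totalWeight w T = totalWeight u T₀ := by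
  classical
  intro w hw hSL T hTmst
  obtain ⟨htree, hmin⟩ := hTmst
  -- unique paths in T
  set P : ∀ a b : V, T.Walk a b := fun a b => (htree.existsUnique_path a b).exists.choose
    with hPdef
  have hPpath : ∀ a b : V, (P a b).IsPath := fun a b =>
    (htree.existsUnique_path a b).exists.choose_spec
  -- the path-max function
  set mfn : V → V → ℝ := fun a b => pathMax w (P a b) with hmfndef
  have hsymm : ∀ a b : V, mfn a b = mfn b a := by
    intro a b
    have hrev : P b a = (P a b).reverse :=
      path_unique htree (hPpath b a) ((hPpath a b).reverse)
    simp only [hmfndef, pathMax, hrev, SimpleGraph.Walk.edges_reverse, List.map_reverse,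
      foldr_max_reverse]
  set v : Sym2 V → ℝ := Sym2.lift ⟨mfn, hsymm⟩ with hvdef
  have hvmk : ∀ a b : V, v s(a, b) = mfn a b := fun a b => Sym2.lift_mk _ a b
  have hmfn_nonneg : ∀ a b : V, 0 ≤ mfn a b := fun a b => foldr_max_nonneg _
  have hmfn_diag : ∀ a : V, mfn a a = 0 := by
    intro a
    have : P a a = SimpleGraph.Walk.nil :=
      path_unique htree (hPpath a a) SimpleGraph.Walk.IsPath.nil
    simp [hmfndef, pathMax, this]
  -- v ≤ w via the cycle property
  have hvw : ∀ e : Sym2 V, v e ≤ w e := by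
    intro e
    induction e using Sym2.ind with
    | _ a b =>
      rw [hvmk]
      refine foldr_max_le (hw.1 _) ?_
      intro r hr
      obtain ⟨g, hg, rfl⟩ := List.mem_map.1 hr
      exact cycle_property htree hmin (hPpath a b) hg
  -- v is an ultrametric
  have hv_ultra : IsUltrametric v := by
    refine ⟨⟨fun e => ?_, fun a => by rw [hvmk, hmfn_diag]⟩, fun a b c => ?_⟩
    · induction e using Sym2.ind with
      | _ a b => rw [hvmk]; exact hmfn_nonneg a b
    · rw [hvmk, hvmk, hvmk]
      set q : T.Walk a c := (P a b).append (P b c) with hqdef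
      have hsub : (P a c).edges ⊆ q.edges := by
        have h1 : P a c = (q.toPath : T.Walk a c) :=
          path_unique htree (hPpath a c) q.toPath.2
        rw [h1]
        exact SimpleGraph.Walk.edges_toPath_subset q
      have hle1 : mfn a c ≤ pathMax w q := by
        refine foldr_max_le (foldr_max_nonneg _) ?_
        intro r hr
        obtain ⟨g, hg, rfl⟩ := List.mem_map.1 hr
        exact le_foldr_max (List.mem_map_of_mem (f := w) (hsub hg))
      have hq : pathMax w q = max (mfn a b) (mfn b c) := by
        simp only [hmfndef, pathMax, hqdef, SimpleGraph.Walk.edges_append, List.map_append]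
        exact foldr_max_append _ _
      rw [← hq]
      exact hle1
  -- SL w ≤ w
  have hSLle : ∀ e : Sym2 V, SL w e ≤ w e := by
    intro e
    refine csSup_le ⟨0, (fun _ => 0), ⟨⟨fun _ => le_refl 0, fun _ => rfl⟩,
      fun _ _ _ => by simp⟩, fun g => hw.1 g, rfl⟩ ?_
    rintro r ⟨u', _, hle, rfl⟩
    exact hle e
  -- v ≤ SL w
  have hvSL : ∀ e : Sym2 V, v e ≤ SL w e := by
    intro e
    refine le_csSup ⟨w e, ?_⟩ ⟨v, hv_ultra, fun g => hvw g, rfl⟩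
    rintro r ⟨u', _, hle, rfl⟩
    exact hle e
  have hSLe : ∀ e : Sym2 V, SL w e = u e := fun e => congrFun hSL e
  -- on tree edges, w = u
  have hedge : ∀ e ∈ T.edgeSet, w e = u e := by
    intro e he
    have hair : v e ≤ u e := (hvSL e).trans (le_of_eq (hSLe e))
    have hwu : u e ≤ w e := (hSLe e) ▸ (hSLle e)
    have hwv : w e ≤ v e := by
      revert he
      induction e using Sym2.ind with
      | _ a b =>
        intro he
        have hadj : T.Adj a b := (SimpleGraph.mem_edgeSet _).1 he
        have hsingle : P a b = (SimpleGraph.Path.singleton hadj : T.Walk a b) :=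
          path_unique htree (hPpath a b) (SimpleGraph.Path.singleton hadj).2
        rw [hvmk, hmfndef]
        simp only [pathMax, hsingle, SimpleGraph.Path.singleton,
          SimpleGraph.Walk.edges_cons, SimpleGraph.Walk.edges_nil, List.map_cons,
          List.map_nil, List.foldr_cons, List.foldr_nil]
        exact le_max_left _ _
    exact le_antisymm ((hwv.trans hair)) hwu
  -- total weights agree on T
  have htot : totalWeight w T = totalWeight u T := by
    unfold totalWeight
    refine Finset.sum_congr rfl fun e hee => ?_
    exact hedge e ((Set.Finite.mem_toFinset _).1 hee)
  -- T satisfies the cycle condition for u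
  have hcond_u : ∀ (x y : V) (p : T.Walk x y), p.IsPath → ∀ f ∈ p.edges,
      u f ≤ u s(x, y) := by
    intro x y p hp f hfm
    have hpP : p = P x y := path_unique htree hp (hPpath x y)
    have hfT : f ∈ T.edgeSet := p.edges_subset_edgeSet hfm
    have h1 : u f = w f := (hedge f hfT).symm
    have h2 : w f ≤ mfn x y := by
      refine le_foldr_max ?_
      rw [← hpP]
      exact List.mem_map_of_mem (f := w) hfm
    have h3 : mfn x y = v s(x, y) := (hvmk x y).symm
    have h4 : v s(x, y) ≤ u s(x, y) := (hvSL _).trans (le_of_eq (hSLe _))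
    rw [h1]
    exact (h2.trans (le_of_eq h3)).trans h4
  -- T is an MST of u, conclude
  have hTMSTu := isMST_of_cycle_cond htree hcond_u
  have h1 : totalWeight u T ≤ totalWeight u T₀ := hTMSTu T₀ hT₀.1
  have h2 : totalWeight u T₀ ≤ totalWeight u T := hT₀.2 T htree
  rw [htot]
  exact le_antisymm h1 h2
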